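/- arXiv:1602.08784 — 2 statements merged into one kernel-verified Lean document; each statement's English description precedes it below -/
import Mathlib

section
/- For all 0 < ε', η, σ < 1 there exists δ > 0 such that for every α > 0 there exists γ > 0 such that the following holds. Let Γ = (V, E_Γ) be an n-vertex (p,β)-jumbled 3-uniform hypergraph with 0 < p ≤ 1, αp ≤ q ≤ p, and β ≤ γ p n^{3/2}. Let G be a spanning subhypergraph of Γ satisfying Q'(η,δ,q). Then every pair (X,Y) with X, Y ⊆ V and |X|, |Y| ≥ σn satisfies DISC(q,p,ε') in G. -/
open Finset
open scoped Classical
set_option maxHeartbeats 1000000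

/-- The pairs (2-element subsets) of a finite vertex set `X`. -/
def pairsOf {V : Type*} [DecidableEq V] (X : Finset V) : Finset (Finset V) :=
  X.powersetCard 2

/-- Incidence count between a set `X` of pairs and a set `Y` of vertices:
the number of pairs `(S, y)` with `S ∈ X`, `y ∈ Y` and `S ∪ {y}` an edge. -/
def eHG {V : Type*} [DecidableEq V] (E : Finset (Finset V)) (X : Finset (Finset V))
    (Y : Finset V) : ℕ :=
  ((X ×ˢ Y).filter (fun z => insert z.2 z.1 ∈ E)).card

/-- The neighbourhood of a pair `S` inside a vertex set `W`. -/
def nbhd {V : Type*} [DecidableEq V] (E : Finset (Finset V)) (S : Finset V)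
    (W : Finset V) : Finset V :=
  W.filter (fun w => insert w S ∈ E)

/-- `E` is a `3`-uniform hypergraph. -/
def Uniform3 {V : Type*} (E : Finset (Finset V)) : Prop := ∀ e ∈ E, e.card = 3

/-- `(p, β)`-jumbledness for a `3`-uniform hypergraph. -/
def Jumbled {V : Type*} [DecidableEq V] (E : Finset (Finset V)) (p β : ℝ) : Prop :=
  ∀ X : Finset (Finset V), (∀ S ∈ X, S.card = 2) → ∀ Y : Finset V,
    |(eHG E X Y : ℝ) - p * X.card * Y.card| ≤ β * Real.sqrt (X.card * Y.card)

/-- Property `Q'(η, δ, q)` for a 3-uniform hypergraph on the vertex type `V`. -/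
def PropQ' {V : Type*} [Fintype V] [DecidableEq V] (E : Finset (Finset V))
    (η δ q : ℝ) : Prop :=
  ∀ X : Finset (Finset V), (∀ S ∈ X, S.card = 2) → ∀ Y : Finset V,
    η * ((Fintype.card V).choose 2 : ℝ) ≤ X.card → η * (Fintype.card V : ℝ) ≤ Y.card →
    (1 - δ) * q * X.card * Y.card ≤ (eHG E X Y : ℝ) ∧
      (eHG E X Y : ℝ) ≤ (1 + δ) * q * X.card * Y.card

/-- The pair `(X, Y)` of vertex sets satisfies `DISC(q, p, ε)` in the
3-uniform hypergraph with edge set `E`. -/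
def DiscH {V : Type*} [DecidableEq V] (E : Finset (Finset V)) (X Y : Finset V)
    (q p ε : ℝ) : Prop :=
  ∀ X' ⊆ pairsOf X, ∀ Y' ⊆ Y,
    |(eHG E X' Y' : ℝ) - q * X'.card * Y'.card| ≤ ε * p * (X.card.choose 2 : ℝ) * Y.card

/-- The pair `(X, Y)` of vertex sets satisfies `PAIR(q, p, δ)` in the
3-uniform hypergraph with edge set `E`. -/
def PairP {V : Type*} [DecidableEq V] (E : Finset (Finset V)) (X Y : Finset V)
    (q p δ : ℝ) : Prop :=
  (∑ S₁ ∈ pairsOf X, |((nbhd E S₁ Y).card : ℝ) - q * Y.card|)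
      ≤ δ * p * (X.card.choose 2 : ℝ) * Y.card ∧
  (∑ S₁ ∈ pairsOf X, ∑ S₂ ∈ pairsOf X,
      |((nbhd E S₁ Y ∩ nbhd E S₂ Y).card : ℝ) - q ^ 2 * Y.card|)
      ≤ δ * p ^ 2 * ((X.card.choose 2 : ℝ)) ^ 2 * Y.card

/-- The 3-uniform hypergraph with edge set `E` satisfies `TUPLE(δ, q)`. -/
def TupleP {V : Type*} [Fintype V] [DecidableEq V] (E : Finset (Finset V))
    (δ q : ℝ) : Prop :=
  (((pairsOf (Finset.univ : Finset V)).filter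
      (fun S => ¬ |((nbhd E S Finset.univ).card : ℝ) - (Fintype.card V : ℝ) * q|
          < δ * (Fintype.card V : ℝ) * q)).card : ℝ)
      ≤ δ * ((Fintype.card V).choose 2 : ℝ) ∧
  ((((pairsOf (Finset.univ : Finset V)).powersetCard 2).filter
      (fun P => ¬ ∀ S₁ ∈ P, ∀ S₂ ∈ P, S₁ ≠ S₂ →
        |((nbhd E S₁ Finset.univ ∩ nbhd E S₂ Finset.univ).card : ℝ)
            - (Fintype.card V : ℝ) * q ^ 2|
          < δ * (Fintype.card V : ℝ) * q ^ 2)).card : ℝ)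
      ≤ δ * ((((Fintype.card V).choose 2).choose 2 : ℕ) : ℝ)

lemma eHG_union_left {V : Type*} [DecidableEq V] (E : Finset (Finset V))
    {X₁ X₂ : Finset (Finset V)} (h : Disjoint X₁ X₂) (Y : Finset V) :
    eHG E (X₁ ∪ X₂) Y = eHG E X₁ Y + eHG E X₂ Y := by
  unfold eHG
  rw [Finset.union_product, Finset.filter_union, Finset.card_union_of_disjoint]
  exact Finset.disjoint_filter_filter (Finset.disjoint_left.mpr fun z hz1 hz2 =>
    (Finset.disjoint_left.mp h (Finset.mem_product.mp hz1).1 (Finset.mem_product.mp hz2).1))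

lemma eHG_union_right {V : Type*} [DecidableEq V] (E : Finset (Finset V))
    (X : Finset (Finset V)) {Y₁ Y₂ : Finset V} (h : Disjoint Y₁ Y₂) :
    eHG E X (Y₁ ∪ Y₂) = eHG E X Y₁ + eHG E X Y₂ := by
  unfold eHG
  rw [Finset.product_union, Finset.filter_union, Finset.card_union_of_disjoint]
  exact Finset.disjoint_filter_filter (Finset.disjoint_left.mpr fun z hz1 hz2 =>
    (Finset.disjoint_left.mp h (Finset.mem_product.mp hz1).2 (Finset.mem_product.mp hz2).2))


lemma keyLem {V : Type} [Fintype V] [DecidableEq V] (EG : Finset (Finset V))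
    (η δ q : ℝ) (hη0 : 0 < η) (hq : 0 ≤ q) (hδ : 0 ≤ δ)
    (hQ : PropQ' EG η δ q) (k : ℕ) (hk : (1:ℝ) ≤ 2 ^ k * (1 - η))
    (hηn : 2 ≤ (1 - η) * (Fintype.card V : ℝ))
    (hηC : 2 ≤ (1 - η) * (((Fintype.card V).choose 2 : ℕ) : ℝ)) :
    ∀ X' : Finset (Finset V), (∀ S ∈ X', S.card = 2) → ∀ Y' : Finset V,
      |(eHG EG X' Y' : ℝ) - q * X'.card * Y'.card| ≤
        2 ^ (2 * k + 4) * δ * q * (((Fintype.card V).choose 2 : ℕ) : ℝ) * (Fintype.card V : ℝ) := by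
  set n : ℕ := Fintype.card V with hn
  set C : ℕ := n.choose 2 with hC
  have h1η : 0 < 1 - η := by
    by_contra h
    push_neg at h
    nlinarith [Nat.cast_nonneg (α := ℝ) n]
  have hη1 : η ≤ 1 := by linarith
  have hn0 : (0:ℝ) < (n:ℝ) := by nlinarith
  have hC0 : (0:ℝ) < (C:ℝ) := by nlinarith
  -- subset of all pairs
  have hsubU : ∀ X' : Finset (Finset V), (∀ S ∈ X', S.card = 2) → X' ⊆ pairsOf (univ : Finset V) := by
    intro X' h2 S hS
    simp only [pairsOf, Finset.mem_powersetCard]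
    exact ⟨Finset.subset_univ S, h2 S hS⟩
  have hcardU : (pairsOf (univ : Finset V)).card = C := by
    simp [pairsOf, Finset.card_powersetCard, Finset.card_univ]; rfl
  have hXle : ∀ X' : Finset (Finset V), (∀ S ∈ X', S.card = 2) → (X'.card : ℝ) ≤ (C:ℝ) := by
    intro X' h2
    exact_mod_cast hcardU ▸ Finset.card_le_card (hsubU X' h2)
  have hYle : ∀ Y' : Finset V, (Y'.card : ℝ) ≤ (n:ℝ) := by
    intro Y'; exact_mod_cast Finset.card_le_univ Y'
  -- Step A : direct use of Q'
  have stepA : ∀ X' : Finset (Finset V), (∀ S ∈ X', S.card = 2) →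
      η * (C:ℝ) ≤ X'.card → ∀ Y' : Finset V, η * (n:ℝ) ≤ Y'.card →
      |(eHG EG X' Y' : ℝ) - q * X'.card * Y'.card| ≤ δ * q * (C:ℝ) * (n:ℝ) := by
    intro X' h2 hX Y' hY
    obtain ⟨hlo, hhi⟩ := hQ X' h2 Y' hX hY
    have hx0 : (0:ℝ) ≤ (X'.card:ℝ) := Nat.cast_nonneg _
    have hy0 : (0:ℝ) ≤ (Y'.card:ℝ) := Nat.cast_nonneg _
    have h1 : |(eHG EG X' Y' : ℝ) - q * X'.card * Y'.card| ≤ δ * (q * X'.card * Y'.card) := by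
      rw [abs_le]
      constructor <;> nlinarith
    calc |(eHG EG X' Y' : ℝ) - q * X'.card * Y'.card| ≤ δ * (q * X'.card * Y'.card) := h1
      _ = (δ * q) * (X'.card:ℝ) * (Y'.card:ℝ) := by ring
      _ ≤ (δ * q) * (C:ℝ) * (n:ℝ) := by
          have hx' := hXle X' h2
          have hy' := hYle Y'
          have hdq : 0 ≤ δ * q := mul_nonneg hδ hq
          apply mul_le_mul (mul_le_mul_of_nonneg_left hx' hdq) hy' hy0
          positivity
      _ = δ * q * (C:ℝ) * (n:ℝ) := by ring
  -- the Y-side padding constant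
  set MY : ℕ := n - ⌈η * (n:ℝ)⌉₊ with hMY
  have hceilY : ⌈η * (n:ℝ)⌉₊ ≤ n := by
    rw [Nat.ceil_le]
    nlinarith
  have stepB : ∀ j : ℕ, ∀ X' : Finset (Finset V), (∀ S ∈ X', S.card = 2) →
      η * (C:ℝ) ≤ X'.card → ∀ Y' : Finset V, Y'.card ≤ 2 ^ j * MY →
      |(eHG EG X' Y' : ℝ) - q * X'.card * Y'.card| ≤ 2 ^ j * (2 * (δ * q * (C:ℝ) * (n:ℝ))) := by
    intro j
    induction j with
    | zero =>
      intro X' h2 hX Y' hYcard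
      simp only [pow_zero, one_mul] at hYcard ⊢
      have hfit : ⌈η * (n:ℝ)⌉₊ ≤ ((univ : Finset V) \ Y').card := by
        rw [Finset.card_sdiff_of_subset (Finset.subset_univ Y'), Finset.card_univ, ← hn]
        omega
      obtain ⟨Z, hZsub, hZcard⟩ := Finset.exists_subset_card_eq hfit
      have hdisj : Disjoint Y' Z := by
        rw [Finset.disjoint_left]
        intro a ha haZ
        exact (Finset.mem_sdiff.mp (hZsub haZ)).2 ha
      have hZn : η * (n:ℝ) ≤ (Z.card : ℝ) := by
        rw [hZcard]; exact_mod_cast Nat.le_ceil _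
      have hUZn : η * (n:ℝ) ≤ ((Y' ∪ Z).card : ℝ) := by
        refine le_trans hZn ?_
        exact_mod_cast Finset.card_le_card Finset.subset_union_right
      have hA1 := stepA X' h2 hX (Y' ∪ Z) hUZn
      have hA2 := stepA X' h2 hX Z hZn
      have hadd : (eHG EG X' (Y' ∪ Z) : ℝ) = (eHG EG X' Y' : ℝ) + (eHG EG X' Z : ℝ) := by
        exact_mod_cast congrArg (Nat.cast (R := ℝ)) (eHG_union_right EG X' hdisj)
      have hcard : ((Y' ∪ Z).card : ℝ) = (Y'.card : ℝ) + (Z.card : ℝ) := by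
        exact_mod_cast congrArg (Nat.cast (R := ℝ)) (Finset.card_union_of_disjoint hdisj)
      have hsplit : (eHG EG X' Y' : ℝ) - q * X'.card * Y'.card =
          ((eHG EG X' (Y' ∪ Z) : ℝ) - q * X'.card * ((Y' ∪ Z).card : ℝ)) -
          ((eHG EG X' Z : ℝ) - q * X'.card * (Z.card : ℝ)) := by
        rw [hadd, hcard]; ring
      rw [hsplit]
      refine le_trans (abs_sub _ _) ?_
      linarith
    | succ j ih =>
      intro X' h2 hX Y' hYcard
      have hB0 : (0:ℝ) ≤ 2 * (δ * q * (C:ℝ) * (n:ℝ)) := by positivity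
      by_cases hsmall : Y'.card ≤ 2 ^ j * MY
      · refine le_trans (ih X' h2 hX Y' hsmall) ?_
        have : (2:ℝ) ^ j ≤ 2 ^ (j+1) := by
          apply pow_le_pow_right₀ (by norm_num) (by omega)
        nlinarith
      · push_neg at hsmall
        obtain ⟨A, hAsub, hAcard⟩ := Finset.exists_subset_card_eq (s := Y') (n := 2 ^ j * MY) (le_of_lt hsmall)
        set B : Finset V := Y' \ A with hB
        have hdisj : Disjoint A B := Finset.disjoint_sdiff
        have hunion : A ∪ B = Y' := Finset.union_sdiff_of_subset hAsub
        have hBcard : B.card = Y'.card - A.card := Finset.card_sdiff_of_subset hAsub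
        have hBle : B.card ≤ 2 ^ j * MY := by
          rw [hBcard, hAcard]
          have : Y'.card ≤ 2 ^ (j+1) * MY := hYcard
          have h2j : 2 ^ (j+1) * MY = 2 ^ j * MY + 2 ^ j * MY := by ring
          omega
        have hAle : A.card ≤ 2 ^ j * MY := le_of_eq hAcard
        have h1 := ih X' h2 hX A hAle
        have h2' := ih X' h2 hX B hBle
        have hadd : (eHG EG X' Y' : ℝ) = (eHG EG X' A : ℝ) + (eHG EG X' B : ℝ) := by
          rw [← hunion]
          exact_mod_cast congrArg (Nat.cast (R := ℝ)) (eHG_union_right EG X' hdisj)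
        have hcard : (Y'.card : ℝ) = (A.card : ℝ) + (B.card : ℝ) := by
          rw [← hunion]
          exact_mod_cast congrArg (Nat.cast (R := ℝ)) (Finset.card_union_of_disjoint hdisj)
        have hsplit : (eHG EG X' Y' : ℝ) - q * X'.card * Y'.card =
            ((eHG EG X' A : ℝ) - q * X'.card * A.card) +
            ((eHG EG X' B : ℝ) - q * X'.card * B.card) := by
          rw [hadd, hcard]; ring
        rw [hsplit]
        refine le_trans (abs_add_le _ _) ?_
        have hpow : (2:ℝ) ^ (j+1) * (2 * (δ * q * (C:ℝ) * (n:ℝ))) =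
            2 ^ j * (2 * (δ * q * (C:ℝ) * (n:ℝ))) + 2 ^ j * (2 * (δ * q * (C:ℝ) * (n:ℝ))) := by
          ring
        rw [hpow]
        linarith
  -- apply stepB with j = k+1 to all Y'
  have hMYbig : (n:ℝ) ≤ 2 ^ (k+1) * (MY : ℝ) := by
    have hMYcast : (MY : ℝ) = (n:ℝ) - (⌈η * (n:ℝ)⌉₊ : ℝ) := by
      rw [hMY]; push_cast [hceilY]; ring
    have hceil_lt : (⌈η * (n:ℝ)⌉₊ : ℝ) < η * (n:ℝ) + 1 :=
      Nat.ceil_lt_add_one (by positivity)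
    have hMYge : (1 - η) * (n:ℝ) / 2 ≤ (MY : ℝ) := by
      rw [hMYcast]; nlinarith
    have h2k : (0:ℝ) < 2 ^ k := by positivity
    calc (n:ℝ) = 1 * (n:ℝ) := (one_mul _).symm
      _ ≤ (2 ^ k * (1 - η)) * (n:ℝ) := by nlinarith
      _ = 2 ^ (k+1) * ((1 - η) * (n:ℝ) / 2) := by ring
      _ ≤ 2 ^ (k+1) * (MY : ℝ) := by
          have : (0:ℝ) < 2 ^ (k+1) := by positivity
          nlinarith
  have stepB' : ∀ X' : Finset (Finset V), (∀ S ∈ X', S.card = 2) →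
      η * (C:ℝ) ≤ X'.card → ∀ Y' : Finset V,
      |(eHG EG X' Y' : ℝ) - q * X'.card * Y'.card| ≤ 2 ^ (k+1) * (2 * (δ * q * (C:ℝ) * (n:ℝ))) := by
    intro X' h2 hX Y'
    refine stepB (k+1) X' h2 hX Y' ?_
    have h1 : (Y'.card : ℝ) ≤ (n : ℝ) := hYle Y'
    have : (Y'.card : ℝ) ≤ ((2 ^ (k+1) * MY : ℕ) : ℝ) := by push_cast; linarith [hMYbig]
    exact_mod_cast this
  -- X-side padding
  set MX : ℕ := C - ⌈η * (C:ℝ)⌉₊ with hMX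
  have hceilX : ⌈η * (C:ℝ)⌉₊ ≤ C := by
    rw [Nat.ceil_le]; nlinarith
  set BY : ℝ := 2 ^ (k+1) * (2 * (δ * q * (C:ℝ) * (n:ℝ))) with hBY
  have hBY0 : 0 ≤ BY := by rw [hBY]; positivity
  have stepC : ∀ j : ℕ, ∀ X' : Finset (Finset V), (∀ S ∈ X', S.card = 2) →
      X'.card ≤ 2 ^ j * MX → ∀ Y' : Finset V,
      |(eHG EG X' Y' : ℝ) - q * X'.card * Y'.card| ≤ 2 ^ j * (2 * BY) := by
    intro j
    induction j with
    | zero =>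
      intro X' h2 hX Y'
      simp only [pow_zero, one_mul] at hX ⊢
      have hfit : ⌈η * (C:ℝ)⌉₊ ≤ (pairsOf (univ : Finset V) \ X').card := by
        rw [Finset.card_sdiff_of_subset (hsubU X' h2), hcardU]
        omega
      obtain ⟨Z, hZsub, hZcard⟩ := Finset.exists_subset_card_eq hfit
      have hZpairs : ∀ S ∈ Z, S.card = 2 := by
        intro S hS
        have := (Finset.mem_sdiff.mp (hZsub hS)).1
        simpa [pairsOf, Finset.mem_powersetCard] using this
      have hdisj : Disjoint X' Z := by
        rw [Finset.disjoint_left]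
        intro a ha haZ
        exact (Finset.mem_sdiff.mp (hZsub haZ)).2 ha
      have hZC : η * (C:ℝ) ≤ (Z.card : ℝ) := by
        rw [hZcard]; exact_mod_cast Nat.le_ceil _
      have hUZC : η * (C:ℝ) ≤ ((X' ∪ Z).card : ℝ) := by
        refine le_trans hZC ?_
        exact_mod_cast Finset.card_le_card Finset.subset_union_right
      have hUZpairs : ∀ S ∈ X' ∪ Z, S.card = 2 := by
        intro S hS
        rcases Finset.mem_union.mp hS with h | h
        · exact h2 S h
        · exact hZpairs S h
      have hA1 := stepB' (X' ∪ Z) hUZpairs hUZC Y'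
      have hA2 := stepB' Z hZpairs hZC Y'
      have hadd : (eHG EG (X' ∪ Z) Y' : ℝ) = (eHG EG X' Y' : ℝ) + (eHG EG Z Y' : ℝ) := by
        exact_mod_cast congrArg (Nat.cast (R := ℝ)) (eHG_union_left EG hdisj Y')
      have hcard : ((X' ∪ Z).card : ℝ) = (X'.card : ℝ) + (Z.card : ℝ) := by
        exact_mod_cast congrArg (Nat.cast (R := ℝ)) (Finset.card_union_of_disjoint hdisj)
      have hsplit : (eHG EG X' Y' : ℝ) - q * X'.card * Y'.card =
          ((eHG EG (X' ∪ Z) Y' : ℝ) - q * ((X' ∪ Z).card : ℝ) * Y'.card) -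
          ((eHG EG Z Y' : ℝ) - q * Z.card * Y'.card) := by
        rw [hadd, hcard]; ring
      rw [hsplit]
      refine le_trans (abs_sub _ _) ?_
      rw [hBY]; rw [hBY] at hA1 hA2; linarith
    | succ j ih =>
      intro X' h2 hX Y'
      by_cases hsmall : X'.card ≤ 2 ^ j * MX
      · refine le_trans (ih X' h2 hsmall Y') ?_
        have : (2:ℝ) ^ j ≤ 2 ^ (j+1) := by
          apply pow_le_pow_right₀ (by norm_num) (by omega)
        nlinarith
      · push_neg at hsmall
        obtain ⟨A, hAsub, hAcard⟩ := Finset.exists_subset_card_eq (s := X') (n := 2 ^ j * MX) (le_of_lt hsmall)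
        set B : Finset (Finset V) := X' \ A with hB
        have hdisj : Disjoint A B := Finset.disjoint_sdiff
        have hunion : A ∪ B = X' := Finset.union_sdiff_of_subset hAsub
        have hBcard : B.card = X'.card - A.card := Finset.card_sdiff_of_subset hAsub
        have hBle : B.card ≤ 2 ^ j * MX := by
          rw [hBcard, hAcard]
          have : X'.card ≤ 2 ^ (j+1) * MX := hX
          have h2j : 2 ^ (j+1) * MX = 2 ^ j * MX + 2 ^ j * MX := by ring
          omega
        have hApairs : ∀ S ∈ A, S.card = 2 := fun S hS => h2 S (hAsub hS)
        have hBpairs : ∀ S ∈ B, S.card = 2 := fun S hS => h2 S (Finset.sdiff_subset hS)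
        have h1 := ih A hApairs (le_of_eq hAcard) Y'
        have h2' := ih B hBpairs hBle Y'
        have hadd : (eHG EG X' Y' : ℝ) = (eHG EG A Y' : ℝ) + (eHG EG B Y' : ℝ) := by
          rw [← hunion]
          exact_mod_cast congrArg (Nat.cast (R := ℝ)) (eHG_union_left EG hdisj Y')
        have hcard : (X'.card : ℝ) = (A.card : ℝ) + (B.card : ℝ) := by
          rw [← hunion]
          exact_mod_cast congrArg (Nat.cast (R := ℝ)) (Finset.card_union_of_disjoint hdisj)
        have hsplit : (eHG EG X' Y' : ℝ) - q * X'.card * Y'.card =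
            ((eHG EG A Y' : ℝ) - q * A.card * Y'.card) +
            ((eHG EG B Y' : ℝ) - q * B.card * Y'.card) := by
          rw [hadd, hcard]; ring
        rw [hsplit]
        refine le_trans (abs_add_le _ _) ?_
        have hpow : (2:ℝ) ^ (j+1) * (2 * BY) = 2 ^ j * (2 * BY) + 2 ^ j * (2 * BY) := by ring
        rw [hpow]
        linarith
  -- conclude
  intro X' h2 Y'
  have hMXbig : (C:ℝ) ≤ 2 ^ (k+1) * (MX : ℝ) := by
    have hMXcast : (MX : ℝ) = (C:ℝ) - (⌈η * (C:ℝ)⌉₊ : ℝ) := by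
      rw [hMX]; push_cast [hceilX]; ring
    have hceil_lt : (⌈η * (C:ℝ)⌉₊ : ℝ) < η * (C:ℝ) + 1 :=
      Nat.ceil_lt_add_one (by positivity)
    have hMXge : (1 - η) * (C:ℝ) / 2 ≤ (MX : ℝ) := by
      rw [hMXcast]; nlinarith
    have h2k : (0:ℝ) < 2 ^ k := by positivity
    calc (C:ℝ) = 1 * (C:ℝ) := (one_mul _).symm
      _ ≤ (2 ^ k * (1 - η)) * (C:ℝ) := by nlinarith
      _ = 2 ^ (k+1) * ((1 - η) * (C:ℝ) / 2) := by ring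
      _ ≤ 2 ^ (k+1) * (MX : ℝ) := by
          have : (0:ℝ) < 2 ^ (k+1) := by positivity
          nlinarith
  have hXcard : X'.card ≤ 2 ^ (k+1) * MX := by
    have h1 : (X'.card : ℝ) ≤ (C : ℝ) := hXle X' h2
    have : (X'.card : ℝ) ≤ ((2 ^ (k+1) * MX : ℕ) : ℝ) := by push_cast; linarith [hMXbig]
    exact_mod_cast this
  refine le_trans (stepC (k+1) X' h2 hXcard Y') ?_
  rw [hBY]
  have : (2:ℝ) ^ (k + 1) * (2 * (2 ^ (k + 1) * (2 * (δ * q * (C:ℝ) * (n:ℝ))))) =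
      2 ^ (2 * k + 4) * δ * q * (C:ℝ) * (n:ℝ) := by ring
  rw [this]

theorem stmt5 :
    ∀ ε' η σ : ℝ, 0 < ε' → ε' < 1 → 0 < η → η < 1 → 0 < σ → σ < 1 →
    ∃ δ : ℝ, 0 < δ ∧
      ∀ α : ℝ, 0 < α →
      ∃ γ : ℝ, 0 < γ ∧
        ∀ (V : Type) [Fintype V] [DecidableEq V],
        ∀ (EΓ EG : Finset (Finset V)) (p q β : ℝ),
          0 < p → p ≤ 1 → α * p ≤ q → q ≤ p →
          β ≤ γ * p * (Fintype.card V : ℝ) ^ ((3 : ℝ) / 2) →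
          Uniform3 EΓ → Jumbled EΓ p β → EG ⊆ EΓ →
          PropQ' EG η δ q →
          ∀ X Y : Finset V,
            σ * (Fintype.card V : ℝ) ≤ X.card → σ * (Fintype.card V : ℝ) ≤ Y.card →
            DiscH EG X Y q p ε' := by
  intro ε' η σ hε0 hε1 hη0 hη1 hσ0 hσ1
  have h1η : (0:ℝ) < 1 - η := by linarith
  obtain ⟨k, hk'⟩ := pow_unbounded_of_one_lt (1 / (1 - η)) (by norm_num : (1:ℝ) < 2)
  have hk : (1:ℝ) ≤ 2 ^ k * (1 - η) := by
    rw [div_lt_iff₀ h1η] at hk'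
    linarith
  have h2k4 : (0:ℝ) < 2 ^ (2 * k + 4) := by positivity
  obtain ⟨δ, hδdef, hδ0⟩ : ∃ δ : ℝ, δ = ε' * σ ^ 3 / (8 * 2 ^ (2 * k + 4)) ∧ 0 < δ :=
    ⟨_, rfl, by positivity⟩
  refine ⟨δ, hδ0, ?_⟩
  intro α hα
  obtain ⟨n₀, hn₀def⟩ : ∃ n₀ : ℝ, n₀ = max 3 (max (2 / (1 - η)) (2 / σ)) := ⟨_, rfl⟩
  have hn₀3 : (3:ℝ) ≤ n₀ := hn₀def ▸ le_max_left _ _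
  have hn₀pos : (0:ℝ) < n₀ := by linarith
  have hrp : (0:ℝ) < n₀ ^ ((3:ℝ)/2) := Real.rpow_pos_of_pos hn₀pos _
  obtain ⟨γ, hγdef, hγ0⟩ : ∃ γ : ℝ, γ = 1 / (2 * n₀ ^ ((3:ℝ)/2)) ∧ 0 < γ :=
    ⟨_, rfl, by positivity⟩
  refine ⟨γ, hγ0, ?_⟩
  intro V _ _ EΓ EG p q β hp0 hp1 hαq hqp hβ hU hJ hsub hQ X Y hX hY
  have hq0 : (0:ℝ) < q := lt_of_lt_of_le (mul_pos hα hp0) hαq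
  intro X' hX' Y' hY'
  have hcard2 : ∀ S ∈ X', S.card = 2 := by
    intro S hS
    have := hX' hS
    rw [pairsOf, Finset.mem_powersetCard] at this
    exact this.2
  have hRHS0 : (0:ℝ) ≤ ε' * p * (X.card.choose 2 : ℝ) * Y.card := by positivity
  by_cases hn2 : 2 ≤ Fintype.card V
  · -- at least two vertices
    by_cases hbig : n₀ ≤ (Fintype.card V : ℝ)
    · -- large vertex set : main argument
      obtain ⟨n, hn⟩ : ∃ n : ℕ, n = Fintype.card V := ⟨_, rfl⟩
      obtain ⟨C, hC⟩ : ∃ C : ℕ, C = n.choose 2 := ⟨_, rfl⟩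
      rw [← hn] at hbig hX hY
      have hn3 : (3:ℝ) ≤ (n:ℝ) := le_trans hn₀3 hbig
      have hηn : 2 ≤ (1 - η) * (n:ℝ) := by
        have h1 : 2 / (1 - η) ≤ n₀ := by
          rw [hn₀def]; exact le_trans (le_max_left _ _) (le_max_right _ _)
        have h2 : 2 / (1 - η) ≤ (n:ℝ) := le_trans h1 hbig
        rw [div_le_iff₀ h1η] at h2
        linarith
      have hσn : 2 ≤ σ * (n:ℝ) := by
        have h1 : 2 / σ ≤ n₀ := by
          rw [hn₀def]; exact le_trans (le_max_right _ _) (le_max_right _ _)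
        have h2 : 2 / σ ≤ (n:ℝ) := le_trans h1 hbig
        rw [div_le_iff₀ hσ0] at h2
        linarith
      have hCcast : ((C:ℕ) : ℝ) = (n:ℝ) * ((n:ℝ) - 1) / 2 := by
        rw [hC]; exact Nat.cast_choose_two (K := ℝ) n
      have hnC : (n:ℝ) ≤ (C:ℝ) := by rw [hCcast]; nlinarith
      have hηC : 2 ≤ (1 - η) * ((C:ℕ) : ℝ) := by nlinarith
      rw [hC] at hηC
      rw [hn] at hηn hηC
      have herr := keyLem EG η δ q hη0 (le_of_lt hq0) (le_of_lt hδ0) hQ k hk hηn hηC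
        X' hcard2 Y'
      rw [← hn, ← hC] at herr
      refine le_trans herr ?_
      -- arithmetic finish
      have hXcast : (X.card.choose 2 : ℝ) = (X.card:ℝ) * ((X.card:ℝ) - 1) / 2 :=
        Nat.cast_choose_two (K := ℝ) X.card
      have hx2 : (2:ℝ) ≤ (X.card:ℝ) := le_trans hσn hX
      have hKδ : 2 ^ (2 * k + 4) * δ = ε' * σ ^ 3 / 8 := by
        rw [hδdef]; field_simp
      have hCle : ((C:ℕ):ℝ) ≤ (n:ℝ) ^ 2 / 2 := by rw [hCcast]; nlinarith
      calc 2 ^ (2 * k + 4) * δ * q * ((C:ℕ) : ℝ) * (n:ℝ)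
          = (ε' * σ ^ 3 / 8) * (q * ((C:ℕ):ℝ) * (n:ℝ)) := by rw [← hKδ]; ring
        _ ≤ (ε' * σ ^ 3 / 8) * (p * ((n:ℝ) ^ 2 / 2) * (n:ℝ)) := by
            have h0 : (0:ℝ) ≤ ε' * σ ^ 3 / 8 := by positivity
            have hn0 : (0:ℝ) ≤ (n:ℝ) := by linarith
            have hC0 : (0:ℝ) ≤ ((C:ℕ):ℝ) := Nat.cast_nonneg _
            have h1 : q * ((C:ℕ):ℝ) ≤ p * ((n:ℝ) ^ 2 / 2) :=
              mul_le_mul hqp hCle hC0 (le_of_lt hp0)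
            have h2 : q * ((C:ℕ):ℝ) * (n:ℝ) ≤ p * ((n:ℝ) ^ 2 / 2) * (n:ℝ) :=
              mul_le_mul_of_nonneg_right h1 hn0
            exact mul_le_mul_of_nonneg_left h2 h0
        _ = ε' * p * (σ ^ 3 * (n:ℝ) ^ 3 / 16) := by ring
        _ ≤ ε' * p * ((σ ^ 2 * (n:ℝ) ^ 2 / 4) * (σ * (n:ℝ))) := by
            have h0 : (0:ℝ) ≤ ε' * p := by positivity
            have hn0 : (0:ℝ) ≤ (n:ℝ) := by linarith
            have hin : σ ^ 3 * (n:ℝ) ^ 3 / 16 ≤ σ ^ 2 * (n:ℝ) ^ 2 / 4 * (σ * (n:ℝ)) := by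
              have hnn : (0:ℝ) ≤ σ ^ 3 * (n:ℝ) ^ 3 := by positivity
              nlinarith
            exact mul_le_mul_of_nonneg_left hin h0
        _ ≤ ε' * p * ((X.card.choose 2 : ℝ) * (Y.card:ℝ)) := by
            have h0 : (0:ℝ) ≤ ε' * p := by positivity
            have hn0 : (0:ℝ) ≤ (n:ℝ) := by linarith
            have hxσ : σ * (n:ℝ) ≤ (X.card:ℝ) := hX
            have hyσ : σ * (n:ℝ) ≤ (Y.card:ℝ) := hY
            have h1 : σ ^ 2 * (n:ℝ) ^ 2 / 4 ≤ (X.card.choose 2 : ℝ) := by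
              rw [hXcast]; nlinarith
            have h2 : (0:ℝ) ≤ σ * (n:ℝ) := by positivity
            have h3 : (0:ℝ) ≤ σ ^ 2 * (n:ℝ) ^ 2 / 4 := by positivity
            have h4 : σ ^ 2 * (n:ℝ) ^ 2 / 4 * (σ * (n:ℝ)) ≤
                (X.card.choose 2 : ℝ) * (Y.card:ℝ) :=
              mul_le_mul h1 hyσ h2 (le_trans h3 h1)
            exact mul_le_mul_of_nonneg_left h4 h0
        _ = ε' * p * (X.card.choose 2 : ℝ) * (Y.card:ℝ) := by ring
    · -- small vertex set : contradiction with jumbledness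
      exfalso
      push_neg at hbig
      obtain ⟨S, hSsub, hScard⟩ := Finset.exists_subset_card_eq (by rw [Finset.card_univ]; exact hn2 : 2 ≤ (univ : Finset V).card)
      have hSne : S.Nonempty := Finset.card_pos.mp (by rw [hScard]; norm_num)
      obtain ⟨y, hy⟩ := hSne
      have hSnot : insert y S ∉ EΓ := by
        rw [Finset.insert_eq_self.mpr hy]
        intro h
        have := hU S h
        omega
      have hEΓ : eHG EΓ {S} {y} = 0 := by
        unfold eHG
        rw [Finset.singleton_product_singleton]
        simp [Finset.filter_singleton, hSnot]
      have hj := hJ {S} (by simpa using hScard) {y}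
      rw [hEΓ] at hj
      simp only [Finset.card_singleton, Nat.cast_one, Nat.cast_zero, mul_one, one_mul] at hj
      rw [Real.sqrt_one] at hj
      have hpβ : p ≤ β := by
        have : |(0:ℝ) - p| = p := by rw [zero_sub, abs_neg, abs_of_pos hp0]
        rw [this] at hj
        linarith
      have hr1 : ((Fintype.card V : ℝ)) ^ ((3:ℝ)/2) ≤ n₀ ^ ((3:ℝ)/2) :=
        Real.rpow_le_rpow (Nat.cast_nonneg _) (le_of_lt hbig) (by norm_num)
      have hγn : γ * p * ((Fintype.card V : ℝ)) ^ ((3:ℝ)/2) ≤ p / 2 := by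
        rw [hγdef]
        rw [div_mul_eq_mul_div, one_mul]
        have key : p * ((Fintype.card V : ℝ)) ^ ((3:ℝ)/2) ≤ p * n₀ ^ ((3:ℝ)/2) :=
          mul_le_mul_of_nonneg_left hr1 (le_of_lt hp0)
        rw [div_mul_eq_mul_div]
        rw [div_le_div_iff₀ (by positivity) (by norm_num)]
        nlinarith
      linarith
  · -- fewer than two vertices : X' is empty
    push_neg at hn2
    have hXcard : X.card < 2 := by
      have := Finset.card_le_univ X
      omega
    have hpX : pairsOf X = ∅ := by
      rw [pairsOf, ← Finset.card_eq_zero, Finset.card_powersetCard]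
      exact Nat.choose_eq_zero_of_lt hXcard
    have hX'e : X' = ∅ := Finset.subset_empty.mp (hpX ▸ hX')
    subst hX'e
    have : eHG EG ∅ Y' = 0 := by
      unfold eHG
      rw [Finset.empty_product, Finset.filter_empty, Finset.card_empty]
    rw [this]
    simpa using hRHS0
end

section
/- Let Γ be an n-vertex 3-uniform (p,β)-jumbled hypergraph with vertex set V, and let X, Y ⊆ V. Let B₁ = {(S₁,S₂) ∈ binom(X,2) × binom(X,2) : |N_Γ(S₁) ∩ Y| > 2p|Y|}. Then |B₁| ≤ (β²/(p²|Y|))·binom(|X|,2). -/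
open Finset
open scoped Classical

theorem stmt11 {V : Type*} [Fintype V] [DecidableEq V]
    (EΓ : Finset (Finset V)) (p β : ℝ) (hp : 0 < p)
    (h3 : Uniform3 EΓ) (hj : Jumbled EΓ p β) (X Y : Finset V) :
    (((pairsOf X ×ˢ pairsOf X).filter
        (fun z => 2 * p * Y.card < ((nbhd EΓ z.1 Y).card : ℝ))).card : ℝ)
      ≤ β ^ 2 / (p ^ 2 * Y.card) * ((X.card.choose 2 : ℕ) : ℝ) := by
  classical
  set A := (pairsOf X).filter (fun S => 2 * p * Y.card < ((nbhd EΓ S Y).card : ℝ)) with hA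
  have hsplit : (pairsOf X ×ˢ pairsOf X).filter
      (fun z => 2 * p * Y.card < ((nbhd EΓ z.1 Y).card : ℝ)) = A ×ˢ pairsOf X := by
    ext z
    simp only [hA, Finset.mem_filter, Finset.mem_product]
    tauto
  rw [hsplit, Finset.card_product]
  have hC : (pairsOf X).card = X.card.choose 2 := Finset.card_powersetCard 2 X
  rw [hC]
  push_cast
  have key : (A.card : ℝ) ≤ β ^ 2 / (p ^ 2 * Y.card) := by
    rcases A.eq_empty_or_nonempty with he | hne
    · rw [he]
      simp only [Finset.card_empty, Nat.cast_zero]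
      positivity
    · -- Y is nonempty
      obtain ⟨S0, hS0⟩ := hne
      have hS0' := (Finset.mem_filter.mp hS0).2
      have hnbY : ((nbhd EΓ S0 Y).card : ℝ) ≤ (Y.card : ℝ) := by
        have h0 : (nbhd EΓ S0 Y).card ≤ Y.card :=
          Finset.card_le_card (Finset.filter_subset _ _)
        exact_mod_cast h0
      have hy : (0:ℝ) < Y.card := by nlinarith [(Nat.cast_nonneg Y.card : (0:ℝ) ≤ (Y.card:ℝ))]
      have ha : (0:ℝ) < A.card := by
        exact_mod_cast Finset.card_pos.mpr ⟨S0, hS0⟩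
      have hcard2 : ∀ S ∈ A, S.card = 2 := by
        intro S hS
        have := (Finset.mem_filter.mp hS).1
        exact (Finset.mem_powersetCard.mp this).2
      have hsum : eHG EΓ A Y = ∑ S ∈ A, (nbhd EΓ S Y).card := by
        unfold eHG nbhd
        rw [Finset.card_filter, Finset.sum_product]
        simp only [Finset.card_filter]
      have hlb : (A.card : ℝ) * (2 * p * Y.card) < (eHG EΓ A Y : ℝ) := by
        have h1 := Finset.sum_lt_sum_of_nonempty ⟨S0, hS0⟩
          (fun S hS => (Finset.mem_filter.mp hS).2)
        rw [Finset.sum_const, nsmul_eq_mul] at h1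
        calc (A.card : ℝ) * (2 * p * Y.card) < ∑ S ∈ A, ((nbhd EΓ S Y).card : ℝ) := h1
          _ = (eHG EΓ A Y : ℝ) := by rw [hsum]; push_cast; ring
      have hjA := (abs_le.mp (hj A hcard2 Y)).2
      set s := Real.sqrt ((A.card : ℝ) * Y.card) with hs
      have hs0 : 0 < s := Real.sqrt_pos.mpr (by positivity)
      have hs2 : s ^ 2 = (A.card : ℝ) * Y.card := Real.sq_sqrt (by positivity)
      have hps : p * s < β := by
        have h2 : p * s * s < β * s := by nlinarith
        exact lt_of_mul_lt_mul_right h2 hs0.le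
      rw [le_div_iff₀ (by positivity)]
      nlinarith [mul_pos hp hs0]
  exact mul_le_mul_of_nonneg_right key (by positivity)
end
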